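/- Let A be a complex n×n matrix and k a positive integer with k ≤ n. For t ∈ ℝ write A(t) = e^{it}A + e^{-it}A*, which is Hermitian, and let λ_k(A(t)) denote its k-th largest eigenvalue. If μ ∈ Λ_k(A), then for every t ∈ [0, 2π), e^{it}μ + e^{-it}\overline{μ} ≤ λ_k(A(t)). -/

import Mathlib

open Matrix
open scoped ComplexOrder

/-- The `k`-th largest value (1-indexed, counted with multiplicity) of a finite
family `f : Fin n → ℝ`, defined via sorting; junk value `0` if `k` is out of range. -/
noncomputable def kthLargest {n : ℕ} (f : Fin n → ℝ) (k : ℕ) : ℝ :=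
  if h : 0 < k ∧ k ≤ n then (f ∘ Tuple.sort f) ⟨n - k, by omega⟩ else 0

/-- Let `A` be an `n × n` complex matrix and `k` a positive integer with `k ≤ n`.
For `t ∈ ℝ`, `A(t) = e^{it} A + e^{-it} Aᴴ` is Hermitian; write `λ_k(A(t))` for its
`k`-th largest eigenvalue.  If `μ ∈ Λ_k(A)`, then for every `t ∈ [0, 2π)`,
`e^{it} μ + e^{-it} conj μ ≤ λ_k(A(t))`. -/
theorem rankKNumericalRange_halfplane_bound (n k : ℕ) (hk : 0 < k) (hkn : k ≤ n)
    (A : Matrix (Fin n) (Fin n) ℂ)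
    (hHerm : ∀ t : ℝ,
      (Complex.exp (Complex.I * t) • A + Complex.exp (-(Complex.I * t)) • Aᴴ).IsHermitian)
    (μ : ℂ)
    (hμ : ∃ X : Matrix (Fin n) (Fin k) ℂ,
        Xᴴ * X = 1 ∧ Xᴴ * A * X = μ • (1 : Matrix (Fin k) (Fin k) ℂ)) :
    ∀ t ∈ Set.Ico (0 : ℝ) (2 * Real.pi),
      Complex.exp (Complex.I * t) * μ +
        Complex.exp (-(Complex.I * t)) * (starRingEnd ℂ) μ ≤
      ((kthLargest ((hHerm t).eigenvalues) k : ℝ) : ℂ) := by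
  classical
  obtain ⟨X, hX1, hX2⟩ := hμ
  intro t ht
  have hH := hHerm t
  set f : Fin n → ℝ := hH.eigenvalues with hf
  have hnk : n - k < n := by omega
  set lam : ℝ := (f ∘ Tuple.sort f) ⟨n - k, hnk⟩ with hlam
  have hkth : kthLargest f k = lam := by
    rw [kthLargest, dif_pos ⟨hk, hkn⟩]
  set cC : ℂ := Complex.exp (Complex.I * t) * μ +
      Complex.exp (-(Complex.I * t)) * (starRingEnd ℂ) μ with hc
  -- cC is real
  have hconj : (starRingEnd ℂ) cC = cC := by
    have h1 : (starRingEnd ℂ) (Complex.exp (Complex.I * t)) =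
        Complex.exp (-(Complex.I * t)) := by
      rw [← Complex.exp_conj]; congr 1; simp [Complex.conj_I]
    have h2 : (starRingEnd ℂ) (Complex.exp (-(Complex.I * t))) =
        Complex.exp (Complex.I * t) := by
      rw [← Complex.exp_conj]; congr 1; simp [Complex.conj_I]
    simp [hc, map_add, _root_.map_mul, h1, h2, add_comm]
  -- X^H A^H X
  have hXAH : Xᴴ * Aᴴ * X = (starRingEnd ℂ) μ • (1 : Matrix (Fin k) (Fin k) ℂ) := by
    have := congrArg conjTranspose hX2
    simpa [conjTranspose_mul, Matrix.mul_assoc] using this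
  set H : Matrix (Fin n) (Fin n) ℂ :=
      Complex.exp (Complex.I * t) • A + Complex.exp (-(Complex.I * t)) • Aᴴ with hHdef
  have hXHX : Xᴴ * H * X = cC • (1 : Matrix (Fin k) (Fin k) ℂ) := by
    simp only [hHdef, Matrix.mul_add, Matrix.add_mul, Matrix.mul_smul, Matrix.smul_mul,
      hX2, hXAH, smul_smul, hc, add_smul]
  -- spectral decomposition
  set U : Matrix (Fin n) (Fin n) ℂ := (hH.eigenvectorUnitary : Matrix (Fin n) (Fin n) ℂ) with hU
  have hU1 : star U * U = 1 := hH.eigenvectorUnitary.2.1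
  have hU2 : U * star U = 1 := hH.eigenvectorUnitary.2.2
  set D : Matrix (Fin n) (Fin n) ℂ := diagonal (fun i => (f i : ℂ)) with hD
  have hspec : H = U * D * star U := by
    have := hH.spectral_theorem
    rw [Unitary.conjStarAlgAut_apply] at this
    exact this
  set Y : Matrix (Fin n) (Fin k) ℂ := star U * X with hY
  have hYH : Yᴴ = Xᴴ * U := by
    rw [hY, Matrix.star_eq_conjTranspose, conjTranspose_mul, conjTranspose_conjTranspose]
  have hY1 : Yᴴ * Y = 1 := by
    rw [hYH, hY, Matrix.star_eq_conjTranspose, Matrix.mul_assoc, ← Matrix.mul_assoc U,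
      ← Matrix.star_eq_conjTranspose, hU2, Matrix.one_mul, hX1]
  have hYD : Yᴴ * D * Y = cC • (1 : Matrix (Fin k) (Fin k) ℂ) := by
    rw [hYH, hY, ← hXHX, hspec]
    simp only [Matrix.mul_assoc]
  -- the set of "too large" eigenvalues
  set S : Finset (Fin n) := Finset.univ.filter (fun i => lam < f i) with hS
  have hScard : S.card < k := by
    have hle : S.card ≤ (Finset.Ioi (⟨n - k, hnk⟩ : Fin n)).card := by
      apply Finset.card_le_card_of_injOn (fun i => (Tuple.sort f).symm i)
      · intro i hi
        simp only [Finset.mem_Ioi]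
        by_contra hle
        simp only [Finset.coe_Ioi, Set.mem_Ioi, Finset.mem_coe, Finset.mem_Ioi, not_lt] at hle
        have hmono := Tuple.monotone_sort f hle
        simp only [Function.comp_apply, Equiv.apply_symm_apply] at hmono
        have : lam < f i := by simpa [hS] using hi
        rw [hlam] at this
        exact absurd hmono (not_le.mpr this)
      · intro a _ b _ hab
        exact (Tuple.sort f).symm.injective hab
    rw [Fin.card_Ioi] at hle
    simp only at hle
    omega
  -- find w ≠ 0 with (Y w) vanishing on S
  set M : Matrix S (Fin k) ℂ := Y.submatrix (fun i : S => (i : Fin n)) id with hM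
  have hninj : ¬ Function.Injective M.mulVecLin := by
    intro hinj
    have hfr := LinearMap.finrank_le_finrank_of_injective hinj
    rw [Module.finrank_fintype_fun_eq_card, Module.finrank_fintype_fun_eq_card,
      Fintype.card_fin, Fintype.card_coe] at hfr
    omega
  obtain ⟨w, hw0, hMw⟩ : ∃ w : Fin k → ℂ, w ≠ 0 ∧ M *ᵥ w = 0 := by
    rw [Function.not_injective_iff] at hninj
    obtain ⟨a, b, hab, hne⟩ := hninj
    refine ⟨a - b, sub_ne_zero.mpr hne, ?_⟩
    have : M.mulVecLin (a - b) = 0 := by rw [map_sub, hab, sub_self]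
    simpa [Matrix.mulVecLin_apply] using this
  set v : Fin n → ℂ := Y *ᵥ w with hv
  have hvS : ∀ i ∈ S, v i = 0 := by
    intro i hi
    have : (M *ᵥ w) ⟨i, hi⟩ = 0 := by rw [hMw]; rfl
    simpa [hM, Matrix.mulVec, dotProduct, hv] using this
  -- scalar identities
  have h0 : star v = star w ᵥ* Yᴴ := by rw [hv, Matrix.star_mulVec]
  have hsw : star v ⬝ᵥ v = star w ⬝ᵥ w := by
    rw [hv, h0, ← Matrix.dotProduct_mulVec, Matrix.mulVec_mulVec, hY1, Matrix.one_mulVec]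
  have hkey : star v ⬝ᵥ (D *ᵥ v) = cC * (star w ⬝ᵥ w) := by
    rw [hv, h0, ← Matrix.dotProduct_mulVec, Matrix.mulVec_mulVec, Matrix.mulVec_mulVec,
      hYD, Matrix.smul_mulVec, Matrix.one_mulVec, dotProduct_smul, smul_eq_mul]
  -- convert to real sums
  have hDv : star v ⬝ᵥ (D *ᵥ v) = ((∑ i, f i * Complex.normSq (v i) : ℝ) : ℂ) := by
    simp only [dotProduct, hD, Matrix.mulVec_diagonal, Pi.star_apply]
    push_cast
    refine Finset.sum_congr rfl fun i _ => ?_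
    rw [show star (v i) * ((f i : ℂ) * v i) = (f i : ℂ) * (star (v i) * v i) by ring]
    rw [show star (v i) = (starRingEnd ℂ) (v i) from rfl, ← Complex.normSq_eq_conj_mul_self]
  have hvv : star v ⬝ᵥ v = ((∑ i, Complex.normSq (v i) : ℝ) : ℂ) := by
    simp only [dotProduct, Pi.star_apply]
    push_cast
    refine Finset.sum_congr rfl fun i _ => ?_
    rw [show star (v i) = (starRingEnd ℂ) (v i) from rfl, ← Complex.normSq_eq_conj_mul_self]
  have hww : star w ⬝ᵥ w = ((∑ j, Complex.normSq (w j) : ℝ) : ℂ) := by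
    simp only [dotProduct, Pi.star_apply]
    push_cast
    refine Finset.sum_congr rfl fun j _ => ?_
    rw [show star (w j) = (starRingEnd ℂ) (w j) from rfl, ← Complex.normSq_eq_conj_mul_self]
  set N : ℝ := ∑ j, Complex.normSq (w j) with hN
  have hNv : (∑ i, Complex.normSq (v i) : ℝ) = N := by
    have := hsw
    rw [hvv, hww] at this
    exact_mod_cast this
  have hNpos : 0 < N := by
    obtain ⟨j, hj⟩ := Function.ne_iff.mp hw0
    refine Finset.sum_pos' (fun j _ => Complex.normSq_nonneg _) ⟨j, Finset.mem_univ j, ?_⟩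
    exact Complex.normSq_pos.mpr hj
  -- real part of key identity
  have hre : (∑ i, f i * Complex.normSq (v i) : ℝ) = cC.re * N := by
    have h := hkey
    rw [hDv, hww] at h
    have := congrArg Complex.re h
    simpa [Complex.mul_re] using this
  -- bound the sum
  have hbound : (∑ i, f i * Complex.normSq (v i) : ℝ) ≤ lam * N := by
    calc (∑ i, f i * Complex.normSq (v i) : ℝ)
        ≤ ∑ i, lam * Complex.normSq (v i) := by
          refine Finset.sum_le_sum fun i _ => ?_
          by_cases hfi : lam < f i
          · have : v i = 0 := hvS i (by simp [hS, hfi])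
            simp [this]
          · exact mul_le_mul_of_nonneg_right (not_lt.mp hfi) (Complex.normSq_nonneg _)
      _ = lam * ∑ i, Complex.normSq (v i) := by rw [Finset.mul_sum]
      _ = lam * N := by rw [hNv]
  have hmain : cC.re ≤ lam := by
    have : cC.re * N ≤ lam * N := hre ▸ hbound
    exact le_of_mul_le_mul_right this hNpos
  -- conclude
  have hcre : ((cC.re : ℝ) : ℂ) = cC := Complex.conj_eq_iff_re.mp hconj
  calc cC = ((cC.re : ℝ) : ℂ) := hcre.symm
    _ ≤ ((lam : ℝ) : ℂ) := by exact_mod_cast hmain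
    _ = ((kthLargest f k : ℝ) : ℂ) := by rw [hkth]
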